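/- Let C be a closed convex cone in a finite-dimensional real vector space and S ∈ C. If -I lies in the interior of the tangent cone T_S C for some fixed vector I in the interior of C, then S lies in the interior of C; in fact there exists ε > 0 with S - εI ∈ C. -/

import Mathlib

open Finset

/-- A closed convex cone. -/
def IsClosedConvexCone {V : Type*} [AddCommGroup V] [Module ℝ V] [TopologicalSpace V]
    (C : Set V) : Prop :=
  IsClosed C ∧ Convex ℝ C ∧ ∀ r : ℝ, 0 ≤ r → ∀ x ∈ C, r • x ∈ C

/-- The tangent cone to `C` at `S`: the closure of `{λ (x - S) : x ∈ C, λ ≥ 0}`. -/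
def tanCone {V : Type*} [AddCommGroup V] [Module ℝ V] [TopologicalSpace V]
    (C : Set V) (S : V) : Set V :=
  closure {v | ∃ x ∈ C, ∃ l : ℝ, 0 ≤ l ∧ v = l • (x - S)}

lemma ccc_add {V : Type*} [AddCommGroup V] [Module ℝ V] [TopologicalSpace V] {C : Set V}
    (hC : IsClosedConvexCone C) {a b : V} (ha : a ∈ C) (hb : b ∈ C) : a + b ∈ C := by
  obtain ⟨-, hconv, hcone⟩ := hC
  have h := hconv ha hb (by norm_num : (0:ℝ) ≤ 1/2) (by norm_num : (0:ℝ) ≤ 1/2) (by norm_num)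
  have h2 := hcone 2 (by norm_num) _ h
  have : (2:ℝ) • ((1/2 : ℝ) • a + (1/2 : ℝ) • b) = a + b := by
    rw [smul_add, smul_smul, smul_smul]; norm_num
  rwa [this] at h2

theorem stmt6 {V : Type*} [NormedAddCommGroup V] [NormedSpace ℝ V] [FiniteDimensional ℝ V]
    (C : Set V) (hC : IsClosedConvexCone C) (S : V) (hS : S ∈ C) (I : V)
    (hI : I ∈ interior C) (hmI : -I ∈ interior (tanCone C S)) :
    S ∈ interior C ∧ ∃ ε : ℝ, 0 < ε ∧ S - ε • I ∈ C := by
  obtain ⟨δ, hδ, hball⟩ := Metric.isOpen_iff.1 isOpen_interior I hI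
  have hballC : Metric.ball I δ ⊆ C := hball.trans interior_subset
  by_cases hI0 : I = 0
  · -- C = univ
    have hCuniv : C = Set.univ := by
      ext v
      simp only [Set.mem_univ, iff_true]
      subst hI0
      have hr : (0:ℝ) < ‖v‖ / δ + 1 := by positivity
      have hv : (‖v‖ / δ + 1)⁻¹ • v ∈ Metric.ball (0:V) δ := by
        rw [Metric.mem_ball, dist_zero_right, norm_smul, norm_inv, Real.norm_eq_abs,
          abs_of_pos hr]
        rw [inv_mul_lt_iff₀ hr]
        have hdd : ‖v‖/δ*δ = ‖v‖ := div_mul_cancel₀ _ hδ.ne'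
        nlinarith [norm_nonneg v]
      have := hC.2.2 (‖v‖ / δ + 1) hr.le _ (hballC hv)
      rwa [smul_inv_smul₀ hr.ne'] at this
    constructor
    · rw [hCuniv]; simp
    · exact ⟨1, one_pos, by rw [hCuniv]; trivial⟩
  · -- get w ∈ D close to -I
    have hI' : 0 < ‖I‖ := norm_pos_iff.2 hI0
    set δ' : ℝ := min (δ/2) (‖I‖/2) with hδ'def
    have hδ' : 0 < δ' := lt_min (by linarith) (by linarith)
    have hclose : -I ∈ closure {v | ∃ x ∈ C, ∃ l : ℝ, 0 ≤ l ∧ v = l • (x - S)} :=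
      interior_subset hmI
    obtain ⟨w, hw, hwd⟩ := Metric.mem_closure_iff.1 hclose δ' hδ'
    obtain ⟨x, hx, l, hl, rfl⟩ := hw
    have hlpos : 0 < l := by
      rcases hl.lt_or_eq with h | h
      · exact h
      · exfalso
        rw [← h, zero_smul, dist_zero_right, norm_neg] at hwd
        have : δ' ≤ ‖I‖/2 := min_le_right _ _
        linarith
    -- e = l•(x-S) + I, ‖e‖ < δ'
    set e : V := l • (x - S) + I with he
    have hes : ‖e‖ < δ' := by
      rw [dist_eq_norm] at hwd
      have : -I - l • (x - S) = -e := by rw [he]; abel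
      rw [this, norm_neg] at hwd
      exact hwd
    -- I - 2e ∈ ball I δ ⊆ C
    have hI2e : I - (2:ℝ) • e ∈ C := by
      apply hballC
      rw [Metric.mem_ball, dist_eq_norm]
      have : I - (2:ℝ) • e - I = -((2:ℝ) • e) := by abel
      rw [this, norm_neg, norm_smul]
      simp only [Real.norm_ofNat]
      have : δ' ≤ δ/2 := min_le_left _ _
      linarith
    set ε : ℝ := 1/(2*l) with hε
    have hεpos : 0 < ε := by positivity
    have key : S - ε • I ∈ C := by
      have h1 : (1/(2*l) : ℝ) • (I - (2:ℝ) • e) ∈ C :=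
        hC.2.2 _ (by positivity) _ hI2e
      have h2 : x + (1/(2*l) : ℝ) • (I - (2:ℝ) • e) ∈ C := ccc_add hC hx h1
      have heq : x + (1/(2*l) : ℝ) • (I - (2:ℝ) • e) = S - ε • I := by
        have hx' : x = S + (1/l : ℝ) • (e - I) := by
          rw [he]
          rw [smul_sub, smul_add, smul_smul]
          field_simp
          rw [one_smul]; abel
        rw [hx', hε]
        rw [smul_sub, smul_sub, smul_smul]
        match_scalars <;> field_simp <;> ring
      rwa [heq] at h2
    refine ⟨?_, ε, hεpos, key⟩
    -- S ∈ interior C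
    rw [mem_interior]
    refine ⟨Metric.ball S (ε * δ), ?_, Metric.isOpen_ball, by simp [hεpos, hδ]⟩
    intro y hy
    have hmem : I + ε⁻¹ • (y - S) ∈ Metric.ball I δ := by
      rw [Metric.mem_ball, dist_eq_norm]
      have : I + ε⁻¹ • (y - S) - I = ε⁻¹ • (y - S) := by abel
      rw [this, norm_smul, norm_inv, Real.norm_eq_abs, abs_of_pos hεpos]
      rw [Metric.mem_ball, dist_eq_norm] at hy
      rw [inv_mul_lt_iff₀ hεpos]
      linarith [hy]
    have h1 : ε • (I + ε⁻¹ • (y - S)) ∈ C := hC.2.2 _ hεpos.le _ (hballC hmem)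
    have h2 := ccc_add hC key h1
    have heq : S - ε • I + ε • (I + ε⁻¹ • (y - S)) = y := by
      rw [smul_add, smul_smul, mul_inv_cancel₀ hεpos.ne', one_smul]
      abel
    rwa [heq] at h2
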